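/- Fix a natural number m ≥ 2 and equip V = (ZMod 2)^{2m} with the standard symplectic bilinear form B(x, y) = Σ_{i=0}^{m−1} (x_{2i} y_{2i+1} + x_{2i+1} y_{2i}). Let Γ be the simple graph whose vertices are the nonzero vectors of V, with x adjacent to y exactly when B(x, y) = 1. Then Γ is strongly regular with parameters (2^{2m} − 1, 2^{2m−1}, 2^{2m−2}, 2^{2m−2}), and the eigenvalues of its adjacency matrix over ℝ are 2^{2m−1} with multiplicity 1, 2^{m−1} with multiplicity 2^{2m−1} − 2^{m−1} − 1, and −2^{m−1} with multiplicity 2^{2m−1} + 2^{m−1} − 1. -/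

import Mathlib

open Matrix

open scoped Classical

/-- The standard symplectic bilinear form on `(ZMod 2)^(2m)`:
`B(x, y) = Σ_{i<m} (x_{2i} y_{2i+1} + x_{2i+1} y_{2i})`. -/
def sympForm (m : ℕ) (x y : Fin (2 * m) → ZMod 2) : ZMod 2 :=
  ∑ i : Fin m,
    (x ⟨2 * i.val, by have := i.isLt; omega⟩ * y ⟨2 * i.val + 1, by have := i.isLt; omega⟩
      + x ⟨2 * i.val + 1, by have := i.isLt; omega⟩ * y ⟨2 * i.val, by have := i.isLt; omega⟩)


variable {m : ℕ}

lemma sympForm_comm (x y : Fin (2*m) → ZMod 2) : sympForm m x y = sympForm m y x := by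
  unfold sympForm; exact Finset.sum_congr rfl fun i _ => by ring

lemma sympForm_self (x : Fin (2*m) → ZMod 2) : sympForm m x x = 0 := by
  unfold sympForm
  refine Finset.sum_eq_zero fun i _ => ?_
  rw [mul_comm]
  exact CharTwo.add_self_eq_zero _

lemma sympForm_add_right (x y z : Fin (2*m) → ZMod 2) :
    sympForm m x (y + z) = sympForm m x y + sympForm m x z := by
  unfold sympForm
  rw [← Finset.sum_add_distrib]
  exact Finset.sum_congr rfl fun i _ => by simp [Pi.add_apply]; ring

lemma sympForm_add_left (x y z : Fin (2*m) → ZMod 2) :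
    sympForm m (x + y) z = sympForm m x z + sympForm m y z := by
  rw [sympForm_comm, sympForm_add_right, sympForm_comm z x, sympForm_comm z y]

lemma sympForm_zero_right (x : Fin (2*m) → ZMod 2) : sympForm m x 0 = 0 := by
  unfold sympForm; simp


lemma zmod2_ne_zero {a : ZMod 2} (h : a ≠ 0) : a = 1 := by revert a; decide

lemma sympForm_exists_one {x : Fin (2*m) → ZMod 2} (hx : x ≠ 0) :
    ∃ y, sympForm m x y = 1 := by
  have hex : ∃ j, x j ≠ 0 := by
    by_contra h; push_neg at h; exact hx (funext fun j => h j)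
  obtain ⟨j, hj⟩ := hex
  have hj1 : x j = 1 := zmod2_ne_zero hj
  have hjlt := j.isLt
  by_cases hpar : j.val % 2 = 0
  · refine ⟨fun t => if t.val = 2 * (j.val / 2) + 1 then 1 else 0, ?_⟩
    unfold sympForm
    rw [Finset.sum_eq_single (⟨j.val / 2, by omega⟩ : Fin m)]
    · have h1 : (⟨2 * ((⟨j.val / 2, by omega⟩ : Fin m) : ℕ), by omega⟩ : Fin (2*m)) = j := by
        apply Fin.ext; simp; omega
      rw [h1]
      have c0 : ¬(j.val = 2 * (j.val / 2) + 1) := by omega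
      simp [hj1, c0]
    · intro i _ hne
      have hne' : i.val ≠ j.val / 2 := by
        simpa [Fin.ext_iff] using hne
      have c1 : ¬(2 * i.val = 2 * (j.val / 2) + 1) := by omega
      have c2 : ¬(2 * i.val + 1 = 2 * (j.val / 2) + 1) := by omega
      simp [c1, c2, hne']
    · intro h; exact absurd (Finset.mem_univ _) h
  · refine ⟨fun t => if t.val = 2 * (j.val / 2) then 1 else 0, ?_⟩
    unfold sympForm
    rw [Finset.sum_eq_single (⟨j.val / 2, by omega⟩ : Fin m)]
    · have h1 : (⟨2 * ((⟨j.val / 2, by omega⟩ : Fin m) : ℕ) + 1, by omega⟩ : Fin (2*m)) = j := by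
        apply Fin.ext; simp; omega
      rw [h1]
      have c0 : ¬(j.val = 2 * (j.val / 2)) := by omega
      simp [hj1, c0]
    · intro i _ hne
      have hne' : i.val ≠ j.val / 2 := by
        simpa [Fin.ext_iff] using hne
      have c1 : ¬(2 * i.val = 2 * (j.val / 2)) := by omega
      have c2 : ¬(2 * i.val + 1 = 2 * (j.val / 2)) := by omega
      simp [c1, c2]
    · intro h; exact absurd (Finset.mem_univ _) h

/-- An "affine over F2" count: a function with `φ(y+z)=φy+φz` hitting `1` has fiber
of size half the space. -/
lemma card_filter_one {φ : (Fin (2*m) → ZMod 2) → ZMod 2}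
    (hadd : ∀ y z, φ (y + z) = φ y + φ z) {a} (ha : φ a = 1) :
    2 * (Finset.univ.filter fun y => φ y = 1).card = 2 ^ (2 * m) := by
  classical
  have key : (Finset.univ.filter fun y => ¬ φ y = 1).card
      = (Finset.univ.filter fun y => φ y = 1).card := by
    apply Finset.card_nbij' (i := fun y => y + a) (j := fun y => y + a)
    · intro y hy
      simp only [Finset.coe_filter, Finset.mem_filter, Finset.mem_univ, true_and, Set.mem_setOf_eq] at hy ⊢
      have h0 : φ y = 0 := by
        have : ∀ b : ZMod 2, b ≠ 1 → b = 0 := by decide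
        exact this _ hy
      rw [hadd, h0, ha, zero_add]
    · intro y hy
      simp only [Finset.coe_filter, Finset.mem_filter, Finset.mem_univ, true_and, Set.mem_setOf_eq] at hy ⊢
      rw [hadd, hy, ha]
      decide
    · intro y _
      have : a + a = 0 := funext fun t => CharTwo.add_self_eq_zero (a t)
      simp [add_assoc, this]
    · intro y _
      have : a + a = 0 := funext fun t => CharTwo.add_self_eq_zero (a t)
      simp [add_assoc, this]
  have split := Finset.card_filter_add_card_filter_not
    (s := (Finset.univ : Finset (Fin (2*m) → ZMod 2))) (p := fun y => φ y = 1)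
  have hcard : (Finset.univ : Finset (Fin (2*m) → ZMod 2)).card = 2 ^ (2 * m) := by
    simp [Finset.card_univ]
  omega

lemma card_filter_both {φ ψ : (Fin (2*m) → ZMod 2) → ZMod 2}
    (hφ : ∀ y z, φ (y + z) = φ y + φ z) (hψ : ∀ y z, ψ (y + z) = ψ y + ψ z)
    {a b c} (ha : φ a = 1) (hb : ψ b = 1) (hc : φ c ≠ ψ c) :
    4 * (Finset.univ.filter fun y => φ y = 1 ∧ ψ y = 1).card = 2 ^ (2 * m) := by
  classical
  set χ : (Fin (2*m) → ZMod 2) → ZMod 2 := fun y => φ y + ψ y with hχ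
  have hχadd : ∀ y z, χ (y + z) = χ y + χ z := by
    intro y z; simp only [hχ, hφ, hψ]; ring
  have hχc : χ c = 1 := by
    have : ∀ u v : ZMod 2, u ≠ v → u + v = 1 := by decide
    exact this _ _ hc
  have Hφ := card_filter_one hφ ha
  have Hψ := card_filter_one hψ hb
  have Hχ := card_filter_one hχadd hχc
  have e1 : (Finset.univ.filter fun y => φ y = 1 ∧ ψ y = 1).card
      + (Finset.univ.filter fun y => φ y = 1 ∧ ¬ ψ y = 1).card
      = (Finset.univ.filter fun y => φ y = 1).card := by
    rw [← Finset.filter_filter, ← Finset.filter_filter]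
    exact Finset.card_filter_add_card_filter_not _
  have e2 : (Finset.univ.filter fun y => φ y = 1 ∧ ψ y = 1).card
      + (Finset.univ.filter fun y => ¬ φ y = 1 ∧ ψ y = 1).card
      = (Finset.univ.filter fun y => ψ y = 1).card := by
    have sw : (Finset.univ.filter fun y => φ y = 1 ∧ ψ y = 1)
        = (Finset.univ.filter fun y => ψ y = 1 ∧ φ y = 1) := by
      apply Finset.filter_congr; intro y _; tauto
    have sw2 : (Finset.univ.filter fun y => ¬ φ y = 1 ∧ ψ y = 1)
        = (Finset.univ.filter fun y => ψ y = 1 ∧ ¬ φ y = 1) := by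
      apply Finset.filter_congr; intro y _; tauto
    rw [sw, sw2, ← Finset.filter_filter, ← Finset.filter_filter]
    exact Finset.card_filter_add_card_filter_not _
  have e3 : (Finset.univ.filter fun y => χ y = 1).card
      = (Finset.univ.filter fun y => φ y = 1 ∧ ¬ ψ y = 1).card
      + (Finset.univ.filter fun y => ¬ φ y = 1 ∧ ψ y = 1).card := by
    have hiff : ∀ u v : ZMod 2, (u + v = 1) ↔ ((u = 1 ∧ ¬ v = 1) ∨ (¬ u = 1 ∧ v = 1)) := by
      decide
    have : (Finset.univ.filter fun y => χ y = 1)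
        = (Finset.univ.filter fun y => (φ y = 1 ∧ ¬ ψ y = 1) ∨ (¬ φ y = 1 ∧ ψ y = 1)) := by
      apply Finset.filter_congr; intro y _; exact hiff _ _
    rw [this, Finset.filter_or]
    apply Finset.card_union_of_disjoint
    rw [Finset.disjoint_filter]
    intro y _ hy
    tauto
  omega

/-- The diagram of the 3-transposition group `Sp_{2m}(2)`: the graph on nonzero
vectors of `(ZMod 2)^(2m)`, with `x` adjacent to `y` exactly when `B(x, y) = 1`. -/
noncomputable def sympGraph (m : ℕ) :
    SimpleGraph {x : Fin (2 * m) → ZMod 2 // x ≠ 0} :=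
  SimpleGraph.fromRel (fun a b => sympForm m a b = 1)


lemma sympGraph_adj {a b : {x : Fin (2 * m) → ZMod 2 // x ≠ 0}} :
    (sympGraph m).Adj a b ↔ sympForm m a.val b.val = 1 := by
  constructor
  · rintro ⟨hne, h | h⟩
    · exact h
    · rwa [sympForm_comm]
  · intro h
    refine ⟨?_, Or.inl h⟩
    rintro rfl
    rw [sympForm_self] at h
    exact one_ne_zero h.symm

lemma card_nonperp {v : Fin (2*m) → ZMod 2} (hv : v ≠ 0) :
    2 * (Finset.univ.filter fun w : {x : Fin (2 * m) → ZMod 2 // x ≠ 0} =>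
      sympForm m v w.val = 1).card = 2 ^ (2 * m) := by
  classical
  obtain ⟨a, ha⟩ := sympForm_exists_one hv
  have := card_filter_one (φ := fun y => sympForm m v y) (fun y z => sympForm_add_right v y z) ha
  rw [← this]
  congr 1
  apply Finset.card_nbij (i := Subtype.val)
  · intro w hw
    simp only [Finset.coe_filter, Finset.mem_filter, Finset.mem_univ, true_and, Set.mem_setOf_eq] at hw ⊢
    exact hw
  · intro w₁ _ w₂ _ h
    exact Subtype.ext h
  · intro y hy
    simp only [Finset.coe_filter, Finset.mem_univ, true_and, Set.mem_setOf_eq,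
      Set.mem_image] at hy ⊢
    have hy0 : y ≠ 0 := by
      rintro rfl
      rw [sympForm_zero_right] at hy
      exact one_ne_zero hy.symm
    exact ⟨⟨y, hy0⟩, by simpa using hy, rfl⟩

lemma card_nonperp_pair {v w : Fin (2*m) → ZMod 2} (hv : v ≠ 0) (hw : w ≠ 0) (hvw : v ≠ w) :
    4 * (Finset.univ.filter fun u : {x : Fin (2 * m) → ZMod 2 // x ≠ 0} =>
      sympForm m v u.val = 1 ∧ sympForm m w u.val = 1).card = 2 ^ (2 * m) := by
  classical
  obtain ⟨a, ha⟩ := sympForm_exists_one hv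
  obtain ⟨b, hb⟩ := sympForm_exists_one hw
  have hsum : v + w ≠ 0 := by
    intro h
    apply hvw
    have h2 := congrArg (· + w) h
    have hww : w + w = 0 := funext fun t => CharTwo.add_self_eq_zero (w t)
    simpa [add_assoc, hww] using h2
  obtain ⟨c, hc⟩ := sympForm_exists_one hsum
  have hc' : sympForm m v c ≠ sympForm m w c := by
    rw [sympForm_add_left] at hc
    intro h
    rw [h, CharTwo.add_self_eq_zero] at hc
    exact one_ne_zero hc.symm
  have := card_filter_both (φ := fun y => sympForm m v y) (ψ := fun y => sympForm m w y)
    (fun y z => sympForm_add_right v y z) (fun y z => sympForm_add_right w y z) ha hb hc'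
  rw [← this]
  congr 1
  apply Finset.card_nbij (i := Subtype.val)
  · intro u hu
    simp only [Finset.coe_filter, Finset.mem_filter, Finset.mem_univ, true_and, Set.mem_setOf_eq] at hu ⊢
    exact hu
  · intro u₁ _ u₂ _ h
    exact Subtype.ext h
  · intro y hy
    simp only [Finset.coe_filter, Finset.mem_univ, true_and, Set.mem_setOf_eq,
      Set.mem_image] at hy ⊢
    have hy0 : y ≠ 0 := by
      rintro rfl
      rw [sympForm_zero_right] at hy
      exact one_ne_zero hy.1.symm
    exact ⟨⟨y, hy0⟩, by simpa using hy, rfl⟩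

lemma sympGraph_regular (hm : 2 ≤ m) :
    (sympGraph m).IsRegularOfDegree (2 ^ (2 * m - 1)) := by
  classical
  intro v
  have hdeg : (sympGraph m).degree v
      = (Finset.univ.filter fun w : {x : Fin (2 * m) → ZMod 2 // x ≠ 0} =>
          sympForm m v.val w.val = 1).card := by
    rw [SimpleGraph.degree]
    congr 1
    ext w
    simp [SimpleGraph.mem_neighborFinset, sympGraph_adj]
  have h2 := card_nonperp v.prop
  have hpow : 2 ^ (2 * m) = 2 * 2 ^ (2 * m - 1) := by
    rw [← pow_succ']
    congr 1
    omega
  omega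

lemma sympGraph_common {v w : {x : Fin (2 * m) → ZMod 2 // x ≠ 0}} (hm : 2 ≤ m)
    (hvw : v ≠ w) :
    Fintype.card ((sympGraph m).commonNeighbors v w) = 2 ^ (2 * m - 2) := by
  classical
  have hcard : Fintype.card ((sympGraph m).commonNeighbors v w)
      = (Finset.univ.filter fun u : {x : Fin (2 * m) → ZMod 2 // x ≠ 0} =>
          sympForm m v.val u.val = 1 ∧ sympForm m w.val u.val = 1).card := by
    rw [← Set.toFinset_card]
    congr 1
    ext u
    simp [SimpleGraph.mem_commonNeighbors, sympGraph_adj]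
  have h4 := card_nonperp_pair v.prop w.prop (fun h => hvw (Subtype.ext h))
  have hpow : 2 ^ (2 * m) = 4 * 2 ^ (2 * m - 2) := by
    have : (4 : ℕ) = 2 ^ 2 := rfl
    rw [this, ← pow_add]
    congr 1
    omega
  omega

lemma sympGraph_isSRG (hm : 2 ≤ m) :
    (sympGraph m).IsSRGWith (2 ^ (2 * m) - 1) (2 ^ (2 * m - 1))
      (2 ^ (2 * m - 2)) (2 ^ (2 * m - 2)) := by
  classical
  constructor
  · rw [Fintype.card_subtype_compl]
    have h1 : Fintype.card (Fin (2 * m) → ZMod 2) = 2 ^ (2 * m) := by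
      simp
    have h2 : Fintype.card {x : Fin (2 * m) → ZMod 2 // x = 0} = 1 :=
      Fintype.card_subtype_eq 0
    omega
  · exact sympGraph_regular hm
  · intro v w hadj
    exact sympGraph_common hm hadj.ne
  · intro v w hne _
    exact sympGraph_common hm hne


lemma trace_mulVecLin {ι : Type*} [Fintype ι] [DecidableEq ι] (M : Matrix ι ι ℝ) :
    LinearMap.trace ℝ _ (M.mulVecLin) = M.trace := by
  rw [LinearMap.trace_eq_matrix_trace ℝ (Pi.basisFun ℝ ι), LinearMap.toMatrix_eq_toMatrix']
  congr 1
  ext i j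
  simp [LinearMap.toMatrix'_apply, Matrix.mulVec, dotProduct, Pi.single_apply]

lemma proj_finrank {ι : Type*} [Fintype ι] [DecidableEq ι]
    (f P : Module.End ℝ (ι → ℝ)) (θ : ℝ)
    (h1 : ∀ x, f (P x) = θ • P x)
    (h2 : ∀ x ∈ Module.End.eigenspace f θ, P x = x) :
    ((Module.finrank ℝ (Module.End.eigenspace f θ) : ℝ))
      = LinearMap.trace ℝ (ι → ℝ) P := by
  have hproj : LinearMap.IsProj (Module.End.eigenspace f θ) P :=
    ⟨fun x => Module.End.mem_eigenspace_iff.mpr (h1 x), h2⟩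
  rw [hproj.trace]

lemma spectral_abstract {ι : Type*} [Fintype ι] [DecidableEq ι]
    (A Jm : Matrix ι ι ℝ) (r : ℝ) (hr : 1 ≤ r)
    (hAA : A * A = (r*r) • Jm + (r*r) • 1)
    (hAJ : A * Jm = (2*(r*r)) • Jm)
    (hJA : Jm * A = (2*(r*r)) • Jm)
    (htrA : A.trace = 0) (htrJ : Jm.trace = 4*(r*r) - 1)
    (hcard : (Fintype.card ι : ℝ) = 4*(r*r) - 1) :
    ((Module.finrank ℝ (Module.End.eigenspace A.mulVecLin (2*(r*r))) : ℝ) = 1) ∧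
    ((Module.finrank ℝ (Module.End.eigenspace A.mulVecLin r) : ℝ) = 2*(r*r) - r - 1) ∧
    ((Module.finrank ℝ (Module.End.eigenspace A.mulVecLin (-r)) : ℝ) = 2*(r*r) + r - 1) := by
  have hr0 : r ≠ 0 := by positivity
  have hrr1 : (1:ℝ) ≤ r * r := by nlinarith
  have hn0 : 4*(r*r) - 1 ≠ 0 := by nlinarith
  have hn0' : r ^ 2 * 4 - 1 ≠ 0 := by nlinarith
  set f : Module.End ℝ (ι → ℝ) := A.mulVecLin with hf
  set g : Module.End ℝ (ι → ℝ) := Jm.mulVecLin with hg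
  -- pointwise identities
  have hff : ∀ x, A *ᵥ (A *ᵥ x) = (r*r) • (Jm *ᵥ x) + (r*r) • x := by
    intro x
    rw [mulVec_mulVec, hAA, add_mulVec, smul_mulVec, smul_mulVec, one_mulVec]
  have hfg : ∀ x, A *ᵥ (Jm *ᵥ x) = (2*(r*r)) • (Jm *ᵥ x) := by
    intro x
    rw [mulVec_mulVec, hAJ, smul_mulVec]
  -- membership facts
  have memk : ∀ x ∈ Module.End.eigenspace f (2*(r*r)), Jm *ᵥ x = (4*(r*r) - 1) • x := by
    intro x hx
    rw [Module.End.mem_eigenspace_iff] at hx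
    have hx' : A *ᵥ x = (2*(r*r)) • x := hx
    have h2 := hff x
    rw [hx', mulVec_smul, hx', smul_smul] at h2
    have h4 : (r*r) • (Jm *ᵥ x) = (2*(r*r)*(2*(r*r))) • x - (r*r) • x := by
      rw [h2]; abel
    have h3 : (r*r) • (Jm *ᵥ x) = (r*r) • ((4*(r*r) - 1) • x) := by
      rw [h4, smul_smul, ← sub_smul]
      congr 1
      ring
    exact smul_right_injective _ (by positivity : r*r ≠ 0) h3
  have memr : ∀ θ : ℝ, θ * θ = r * r → ∀ x ∈ Module.End.eigenspace f θ, Jm *ᵥ x = 0 := by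
    intro θ hθ x hx
    rw [Module.End.mem_eigenspace_iff] at hx
    have hx' : A *ᵥ x = θ • x := hx
    have h2 := hff x
    rw [hx', mulVec_smul, hx', smul_smul, hθ] at h2
    have h3 : (r*r) • (Jm *ᵥ x) = (r*r) • (0 : ι → ℝ) := by
      rw [smul_zero]
      have h4 : (r * r) • (Jm *ᵥ x) + (r*r) • x = 0 + (r*r) • x := by
        rw [← h2, zero_add]
      exact add_right_cancel h4
    exact smul_right_injective _ (by positivity : r*r ≠ 0) h3
  refine ⟨?_, ?_, ?_⟩
  · -- eigenvalue 2 r²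
    set P : Module.End ℝ (ι → ℝ) := (4*(r*r) - 1)⁻¹ • g with hP
    have h1 : ∀ x, f (P x) = (2*(r*r)) • P x := by
      intro x
      simp only [hP, LinearMap.smul_apply, _root_.map_smul, hf, hg, mulVecLin_apply,
        mulVec_smul, hfg]
      rw [smul_comm]
    have h2 : ∀ x ∈ Module.End.eigenspace f (2*(r*r)), P x = x := by
      intro x hx
      have := memk x hx
      simp only [hP, LinearMap.smul_apply, hg, mulVecLin_apply, this, smul_smul]
      rw [inv_mul_cancel₀ hn0, one_smul]
    rw [proj_finrank f P _ h1 h2]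
    simp only [hP, _root_.map_smul, hg, smul_eq_mul, trace_mulVecLin, htrJ]
    rw [inv_mul_cancel₀ hn0]
  · -- eigenvalue r
    set P : Module.End ℝ (ι → ℝ) :=
      (2*r)⁻¹ • (f + r • (1 : Module.End ℝ (ι → ℝ))
        - ((2*(r*r)+r)/(4*(r*r)-1)) • g) with hP
    have hPx : ∀ x, P x = (2*r)⁻¹ • (A *ᵥ x + r • x
        - ((2*(r*r)+r)/(4*(r*r)-1)) • (Jm *ᵥ x)) := by
      intro x
      simp [hP, hf, hg, mulVecLin_apply]
    have h1 : ∀ x, f (P x) = r • P x := by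
      intro x
      rw [hPx]
      simp only [hf, _root_.map_smul, mulVecLin_apply, mulVec_add, mulVec_sub, mulVec_smul,
        hff, hfg, hPx]
      match_scalars <;> field_simp <;> ring
    have h2 : ∀ x ∈ Module.End.eigenspace f r, P x = x := by
      intro x hx
      have hJ0 := memr r rfl x hx
      have hx' : A *ᵥ x = r • x := Module.End.mem_eigenspace_iff.mp hx
      rw [hPx, hJ0, hx']
      match_scalars
      field_simp
      ring
    rw [proj_finrank f P _ h1 h2]
    simp only [hP, _root_.map_smul, map_sub, map_add, LinearMap.trace_one, hf, hg,
      smul_eq_mul, trace_mulVecLin, htrA, htrJ, Module.finrank_fintype_fun_eq_card, hcard]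
    field_simp
    ring
  · -- eigenvalue -r
    set P : Module.End ℝ (ι → ℝ) :=
      (2*r)⁻¹ • (r • (1 : Module.End ℝ (ι → ℝ)) - f
        + ((2*(r*r)-r)/(4*(r*r)-1)) • g) with hP
    have hPx : ∀ x, P x = (2*r)⁻¹ • (r • x - A *ᵥ x
        + ((2*(r*r)-r)/(4*(r*r)-1)) • (Jm *ᵥ x)) := by
      intro x
      simp [hP, hf, hg, mulVecLin_apply]
    have h1 : ∀ x, f (P x) = (-r) • P x := by
      intro x
      rw [hPx]
      simp only [hf, _root_.map_smul, mulVecLin_apply, mulVec_add, mulVec_sub, mulVec_smul,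
        hff, hfg, hPx]
      match_scalars <;> field_simp <;> ring
    have h2 : ∀ x ∈ Module.End.eigenspace f (-r), P x = x := by
      intro x hx
      have hJ0 := memr (-r) (by ring) x hx
      have hx' : A *ᵥ x = (-r) • x := Module.End.mem_eigenspace_iff.mp hx
      rw [hPx, hJ0, hx']
      match_scalars
      field_simp
      ring
    rw [proj_finrank f P _ h1 h2]
    simp only [hP, _root_.map_smul, map_sub, map_add, LinearMap.trace_one, hf, hg,
      smul_eq_mul, trace_mulVecLin, htrA, htrJ, Module.finrank_fintype_fun_eq_card, hcard]
    field_simp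
    ring

section Glue
variable {m : ℕ}

lemma compl_adjMatrix_eq (hm : 2 ≤ m) :
    ((sympGraph m)ᶜ.adjMatrix ℝ)
      = (Matrix.of fun _ _ => (1:ℝ)) - 1 - (sympGraph m).adjMatrix ℝ := by
  classical
  ext i j
  by_cases hij : i = j
  · subst hij
    simp [SimpleGraph.adjMatrix_apply, Matrix.one_apply_eq, Matrix.sub_apply]
  · by_cases hadj : (sympGraph m).Adj i j <;>
      simp [SimpleGraph.adjMatrix_apply, Matrix.one_apply_ne hij, Matrix.sub_apply,
        SimpleGraph.compl_adj, hij, hadj]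

lemma sympGraph_spectral (hm : 2 ≤ m) :
    ((Module.finrank ℝ (Module.End.eigenspace
        (Matrix.mulVecLin ((sympGraph m).adjMatrix ℝ)) ((2:ℝ) ^ (2*m-1))) : ℝ)
        = 1) ∧
    ((Module.finrank ℝ (Module.End.eigenspace
        (Matrix.mulVecLin ((sympGraph m).adjMatrix ℝ)) ((2:ℝ) ^ (m-1))) : ℝ)
        = 2*(((2:ℝ)^(m-1))*((2:ℝ)^(m-1))) - (2:ℝ)^(m-1) - 1) ∧
    ((Module.finrank ℝ (Module.End.eigenspace
        (Matrix.mulVecLin ((sympGraph m).adjMatrix ℝ)) (-(2:ℝ) ^ (m-1))) : ℝ)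
        = 2*(((2:ℝ)^(m-1))*((2:ℝ)^(m-1))) + (2:ℝ)^(m-1) - 1) := by
  classical
  have hsrg := sympGraph_isSRG hm
  set r : ℝ := (2:ℝ)^(m-1) with hrdef
  have hr : (1:ℝ) ≤ r := one_le_pow₀ (by norm_num)
  have hk : (2:ℝ)^(2*m-1) = 2*(r*r) := by
    rw [hrdef, ← pow_add, show (m-1)+(m-1) = 2*m-2 by omega]
    rw [show 2*m-1 = (2*m-2)+1 by omega, pow_succ]
    ring
  have hcR : (2:ℝ)^(2*m-2) = r*r := by
    rw [hrdef, ← pow_add, show (m-1)+(m-1) = 2*m-2 by omega]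
  have hpow1 : (1:ℕ) ≤ 2 ^ (2*m) := Nat.one_le_two_pow
  have hcard : ((Fintype.card {x : Fin (2 * m) → ZMod 2 // x ≠ 0} : ℕ) : ℝ)
      = 4*(r*r) - 1 := by
    rw [hsrg.card]
    push_cast [Nat.cast_sub hpow1]
    rw [show 2*m = 2 + (2*m-2) by omega, pow_add, hcR]
    norm_num
  set A : Matrix _ _ ℝ := (sympGraph m).adjMatrix ℝ with hA
  set Jm : Matrix {x : Fin (2 * m) → ZMod 2 // x ≠ 0}
      {x : Fin (2 * m) → ZMod 2 // x ≠ 0} ℝ := Matrix.of fun _ _ => (1:ℝ) with hJm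
  have hAJ : A * Jm = (2*(r*r)) • Jm := by
    ext v w
    rw [hA, SimpleGraph.adjMatrix_mul_apply]
    simp only [hJm, Matrix.of_apply, Finset.sum_const, nsmul_eq_mul, mul_one,
      Matrix.smul_apply, smul_eq_mul]
    change ((sympGraph m).degree v : ℝ) = _
    rw [hsrg.regular v]
    push_cast [hk]
    ring
  have hJA : Jm * A = (2*(r*r)) • Jm := by
    ext v w
    rw [hA, SimpleGraph.mul_adjMatrix_apply]
    simp only [hJm, Matrix.of_apply, Finset.sum_const, nsmul_eq_mul, mul_one,
      Matrix.smul_apply, smul_eq_mul]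
    change ((sympGraph m).degree w : ℝ) = _
    rw [hsrg.regular w]
    push_cast [hk]
    ring
  have hAA : A * A = (r*r) • Jm + (r*r) • 1 := by
    have hm2 := hsrg.matrix_eq (α := ℝ)
    have hmm : A * A = A ^ 2 := (sq A).symm
    rw [hmm, hm2, compl_adjMatrix_eq hm]
    simp only [← Nat.cast_smul_eq_nsmul ℝ]
    push_cast [hk, hcR]
    rw [← hA, ← hJm]
    module
  have htrA : A.trace = 0 := SimpleGraph.trace_adjMatrix ℝ _
  have htrJ : Jm.trace = 4*(r*r) - 1 := by
    rw [← hcard]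
    simp [hJm, Matrix.trace, Matrix.diag, Finset.card_univ]
  rw [hk]
  exact spectral_abstract A Jm r hr hAA hAJ hJA htrA htrJ hcard

end Glue

/-- For `m ≥ 2`, the graph on the nonzero vectors of the symplectic space
`(ZMod 2)^(2m)` (adjacent iff non-perpendicular) is strongly regular with parameters
`(2^(2m) − 1, 2^(2m−1), 2^(2m−2), 2^(2m−2))`, and the eigenvalues of its adjacency
matrix over `ℝ` are `2^(2m−1)` with multiplicity `1`, `2^(m−1)` with multiplicity
`2^(2m−1) − 2^(m−1) − 1`, and `−2^(m−1)` with multiplicity `2^(2m−1) + 2^(m−1) − 1`. -/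
theorem stmt_15 (m : ℕ) (hm : 2 ≤ m) :
    (sympGraph m).IsSRGWith (2 ^ (2 * m) - 1) (2 ^ (2 * m - 1))
      (2 ^ (2 * m - 2)) (2 ^ (2 * m - 2)) ∧
    Module.finrank ℝ (Module.End.eigenspace
      (Matrix.mulVecLin ((sympGraph m).adjMatrix ℝ)) ((2 : ℝ) ^ (2 * m - 1))) = 1 ∧
    Module.finrank ℝ (Module.End.eigenspace
      (Matrix.mulVecLin ((sympGraph m).adjMatrix ℝ)) ((2 : ℝ) ^ (m - 1)))
      = 2 ^ (2 * m - 1) - 2 ^ (m - 1) - 1 ∧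
    Module.finrank ℝ (Module.End.eigenspace
      (Matrix.mulVecLin ((sympGraph m).adjMatrix ℝ)) (-(2 : ℝ) ^ (m - 1)))
      = 2 ^ (2 * m - 1) + 2 ^ (m - 1) - 1 := by
  obtain ⟨h1, h2, h3⟩ := sympGraph_spectral hm
  have hb : (2:ℕ)^(2*m-1) = 2 * (2^(m-1) * 2^(m-1)) := by
    rw [← pow_add, show (m-1)+(m-1) = 2*m-2 by omega,
      show 2*m-1 = (2*m-2)+1 by omega, pow_succ]
    ring
  have ha1 : (1:ℕ) ≤ 2^(m-1) := Nat.one_le_two_pow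
  refine ⟨sympGraph_isSRG hm, ?_, ?_, ?_⟩
  · exact_mod_cast h1
  · have hcast : (((2:ℕ)^(2*m-1) - 2^(m-1) - 1 : ℕ) : ℝ)
        = 2*(((2:ℝ)^(m-1))*((2:ℝ)^(m-1))) - (2:ℝ)^(m-1) - 1 := by
      have hle1 : (2:ℕ)^(m-1) ≤ 2^(2*m-1) := Nat.pow_le_pow_right (by norm_num) (by omega)
      have haa : (2:ℕ)^(m-1) ≤ 2^(m-1) * 2^(m-1) :=
        Nat.le_mul_of_pos_left _ (by positivity)
      have hle2 : (1:ℕ) ≤ 2^(2*m-1) - 2^(m-1) := by omega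
      rw [Nat.cast_sub hle2, Nat.cast_sub hle1]
      push_cast
      rw [show ((2:ℝ)^(2*m-1)) = 2*(((2:ℝ)^(m-1))*((2:ℝ)^(m-1))) from by
        rw [← pow_add, show (m-1)+(m-1) = 2*m-2 by omega,
          show 2*m-1 = (2*m-2)+1 by omega, pow_succ]; ring]
    exact_mod_cast h2.trans hcast.symm
  · have hcast : (((2:ℕ)^(2*m-1) + 2^(m-1) - 1 : ℕ) : ℝ)
        = 2*(((2:ℝ)^(m-1))*((2:ℝ)^(m-1))) + (2:ℝ)^(m-1) - 1 := by
      have hle2 : (1:ℕ) ≤ 2^(2*m-1) + 2^(m-1) := by omega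
      rw [Nat.cast_sub hle2]
      push_cast
      rw [show ((2:ℝ)^(2*m-1)) = 2*(((2:ℝ)^(m-1))*((2:ℝ)^(m-1))) from by
        rw [← pow_add, show (m-1)+(m-1) = 2*m-2 by omega,
          show 2*m-1 = (2*m-2)+1 by omega, pow_succ]; ring]
    exact_mod_cast h3.trans hcast.symm
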